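/- Let I ⊆ [2n] be a subset of even cardinality and let D' ∈ D(I). Then there exists a unique diagram D_max ∈ T_n^e ∩ D(I) such that D' ∈ S(D_max) and D_max is maximal in the following sense: for every D ∈ D(I) with D' ∈ S(D), one has S(D) ⊆ S(D_max). -/

import Mathlib

open scoped Classical

/-- `D` is a symmetric Temperley–Lieb diagram on `4n` vertices, identified with a partial
matching of `[2n] = {1,…,2n}`: a set of pairwise disjoint pairs `(i,j)` with `1 ≤ i < j ≤ 2n`,
noncrossing, and such that no uncovered vertex lies strictly between the endpoints of any pair. -/
def IsTL (n : ℕ) (D : Finset (ℕ × ℕ)) : Prop :=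
  (∀ p ∈ D, 1 ≤ p.1 ∧ p.1 < p.2 ∧ p.2 ≤ 2 * n) ∧
  (∀ p ∈ D, ∀ q ∈ D, p ≠ q → p.1 ≠ q.1 ∧ p.1 ≠ q.2 ∧ p.2 ≠ q.1 ∧ p.2 ≠ q.2) ∧
  (∀ p ∈ D, ∀ q ∈ D, ¬(p.1 < q.1 ∧ q.1 < p.2 ∧ p.2 < q.2)) ∧
  (∀ p ∈ D, ∀ k, p.1 < k → k < p.2 → ∃ q ∈ D, k = q.1 ∨ k = q.2)

/-- `S(D)`: the diagrams of `T_n` contained in `D` such that every removed pair is odd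
(a pair `(i,j)`, `i < j`, is odd when `i` is odd). -/
def SD (n : ℕ) (D : Finset (ℕ × ℕ)) : Set (Finset (ℕ × ℕ)) :=
  {D' | IsTL n D' ∧ D' ⊆ D ∧ ∀ p ∈ D \ D', Odd p.1}

/-- `D` is `I`-compatible: every pair of `D` contains exactly one element of `I`. -/
def Compat (I : Finset ℕ) (D : Finset (ℕ × ℕ)) : Prop :=
  ∀ p ∈ D, (p.1 ∈ I ∧ p.2 ∉ I) ∨ (p.1 ∉ I ∧ p.2 ∈ I)

namespace TLaux

/-- `k` is covered (is an endpoint of a pair) in `D'`. -/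
def cov (D' : Finset (ℕ × ℕ)) (k : ℕ) : Prop := ∃ q ∈ D', k = q.1 ∨ k = q.2

lemma cov_bounds {n : ℕ} {D' : Finset (ℕ × ℕ)} (hD' : IsTL n D') {k : ℕ}
    (h : cov D' k) : 1 ≤ k ∧ k ≤ 2 * n := by
  obtain ⟨q, hq, hk⟩ := h
  have := hD'.1 q hq
  rcases hk with rfl | rfl <;> omega

/-- key parity lemma: a fully covered open interval has even size. -/
lemma evenGap {n : ℕ} {D' : Finset (ℕ × ℕ)} (hD' : IsTL n D') (a b : ℕ)
    (ha : ¬ cov D' a) (hb : ¬ cov D' b)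
    (h : ∀ k, a < k → k < b → cov D' k) : (b - a - 1) % 2 = 0 := by
  obtain ⟨ax1, ax2, ax3, ax4⟩ := hD'
  have hcard : (Finset.Ioo a b).card = b - a - 1 := Nat.card_Ioo a b
  rw [← hcard]
  set P := D'.filter (fun p => a < p.1 ∧ p.2 < b) with hP
  have hPD : ∀ p ∈ P, p ∈ D' := fun p hp => (Finset.mem_filter.mp hp).1
  have hunion : Finset.Ioo a b = P.biUnion (fun p => {p.1, p.2}) := by
    ext k
    simp only [Finset.mem_Ioo, Finset.mem_biUnion, Finset.mem_insert,
      Finset.mem_singleton, hP, Finset.mem_filter]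
    constructor
    · rintro ⟨hak, hkb⟩
      obtain ⟨q, hq, hk⟩ := h k hak hkb
      have hq1 : a < q.1 := by
        by_contra hc1
        push_neg at hc1
        rcases hk with rfl | rfl
        · omega
        · rcases Nat.lt_or_ge q.1 a with h1 | h1
          · exact ha (ax4 q hq a h1 (by omega))
          · exact ha ⟨q, hq, Or.inl (by omega)⟩
      have hq2 : q.2 < b := by
        by_contra hc2
        push_neg at hc2
        rcases hk with rfl | rfl
        · rcases Nat.lt_or_ge b q.2 with h1 | h1
          · exact hb (ax4 q hq b (by omega) h1)
          · exact hb ⟨q, hq, Or.inr (by omega)⟩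
        · omega
      exact ⟨q, ⟨hq, hq1, hq2⟩, hk⟩
    · rintro ⟨p, ⟨hp, hap, hpb⟩, hk⟩
      have := ax1 p hp
      rcases hk with rfl | rfl <;> omega
  have hdisj : ∀ p ∈ P, ∀ q ∈ P, p ≠ q →
      Disjoint ({p.1, p.2} : Finset ℕ) {q.1, q.2} := by
    intro p hp q hq hpq
    have h4 := ax2 p (hPD p hp) q (hPD q hq) hpq
    rw [Finset.disjoint_left]
    intro x hx hx'
    simp only [Finset.mem_insert, Finset.mem_singleton] at hx hx'
    rcases hx with rfl | rfl <;> rcases hx' with h | h <;> omega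
  rw [hunion, Finset.card_biUnion hdisj]
  have hsum : ∀ p ∈ P, ({p.1, p.2} : Finset ℕ).card = 2 := by
    intro p hp
    have := ax1 p (hPD p hp)
    rw [Finset.card_insert_of_notMem (by simp; omega), Finset.card_singleton]
  rw [Finset.sum_congr rfl hsum, Finset.sum_const, smul_eq_mul]
  omega


/-- uncovered vertex of `[1,2n]`. -/
def unc (n : ℕ) (D' : Finset (ℕ × ℕ)) (k : ℕ) : Prop :=
  1 ≤ k ∧ k ≤ 2 * n ∧ ¬ cov D' k

/-- all addable pairs: consecutive uncovered vertices, left one odd. -/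
noncomputable def C0 (n : ℕ) (D' : Finset (ℕ × ℕ)) : Finset (ℕ × ℕ) :=
  ((Finset.Icc 1 (2*n)) ×ˢ (Finset.Icc 1 (2*n))).filter
    (fun p => p.1 < p.2 ∧ Odd p.1 ∧ unc n D' p.1 ∧ unc n D' p.2 ∧
      ∀ k, p.1 < k → k < p.2 → cov D' k)

/-- addable pairs compatible with `I`. -/
noncomputable def Cm (n : ℕ) (I : Finset ℕ) (D' : Finset (ℕ × ℕ)) : Finset (ℕ × ℕ) :=
  (C0 n D').filter (fun p => (p.1 ∈ I ∧ p.2 ∉ I) ∨ (p.1 ∉ I ∧ p.2 ∈ I))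

lemma mem_C0 {n : ℕ} {D' : Finset (ℕ × ℕ)} {p : ℕ × ℕ} :
    p ∈ C0 n D' ↔ p.1 < p.2 ∧ Odd p.1 ∧ unc n D' p.1 ∧ unc n D' p.2 ∧
      ∀ k, p.1 < k → k < p.2 → cov D' k := by
  unfold C0
  simp only [Finset.mem_filter, Finset.mem_product, Finset.mem_Icc]
  constructor
  · tauto
  · intro h
    exact ⟨⟨⟨h.2.2.1.1, h.2.2.1.2.1⟩, ⟨h.2.2.2.1.1, h.2.2.2.1.2.1⟩⟩, h⟩

lemma C0_even_snd {n : ℕ} {D' : Finset (ℕ × ℕ)} (hD' : IsTL n D') {p : ℕ × ℕ}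
    (hp : p ∈ C0 n D') : p.2 % 2 = 0 := by
  rw [mem_C0] at hp
  obtain ⟨hlt, hodd, h1, h2, hbet⟩ := hp
  have := evenGap hD' p.1 p.2 h1.2.2 h2.2.2 hbet
  rw [Nat.odd_iff] at hodd
  omega

lemma C0_succ_unique {n : ℕ} {D' : Finset (ℕ × ℕ)} {p q : ℕ × ℕ}
    (hp : p ∈ C0 n D') (hq : q ∈ C0 n D') (h : p.1 = q.1) : p = q := by
  rw [mem_C0] at hp hq
  obtain ⟨plt, podd, pu1, pu2, pbet⟩ := hp
  obtain ⟨qlt, qodd, qu1, qu2, qbet⟩ := hq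
  have h2 : p.2 = q.2 := by
    rcases Nat.lt_trichotomy p.2 q.2 with h' | h' | h'
    · exact absurd (qbet p.2 (by omega) h') pu2.2.2
    · exact h'
    · exact absurd (pbet q.2 (by omega) h') qu2.2.2
  exact Prod.ext h h2

lemma C0_sep {n : ℕ} {D' : Finset (ℕ × ℕ)} (hD' : IsTL n D') {p q : ℕ × ℕ}
    (hp : p ∈ C0 n D') (hq : q ∈ C0 n D') (h : p.1 < q.1) : p.2 < q.1 := by
  have hpe := C0_even_snd hD' hp
  rw [mem_C0] at hp hq
  obtain ⟨plt, podd, pu1, pu2, pbet⟩ := hp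
  obtain ⟨qlt, qodd, qu1, qu2, qbet⟩ := hq
  rcases Nat.lt_trichotomy p.2 q.1 with h' | h' | h'
  · exact h'
  · rw [Nat.odd_iff] at qodd; omega
  · exact absurd (pbet q.1 h h') qu1.2.2


/-- endpoints of pairs of `D \ D'` are uncovered in `D'`. -/
lemma uncov_of_diff {n : ℕ} {D D' : Finset (ℕ × ℕ)} (hD : IsTL n D)
    (hsub : D' ⊆ D) {p : ℕ × ℕ} (hpD : p ∈ D) (hpD' : p ∉ D') {i : ℕ}
    (hi : i = p.1 ∨ i = p.2) : ¬ cov D' i := by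
  rintro ⟨q, hq, hiq⟩
  have hqD : q ∈ D := hsub hq
  have hne : p ≠ q := fun h => hpD' (h ▸ hq)
  have := hD.2.1 p hpD q hqD hne
  rcases hi with rfl | rfl <;> rcases hiq with h | h <;> omega

/-- main structural lemma: a pair of `D \ D'` (with all removed pairs odd) is in `C0`. -/
lemma mem_C0_of_diff {n : ℕ} {D D' : Finset (ℕ × ℕ)} (hD' : IsTL n D') (hD : IsTL n D)
    (hsub : D' ⊆ D) (hodd : ∀ p ∈ D \ D', Odd p.1)
    {p : ℕ × ℕ} (hpD : p ∈ D) (hpD' : p ∉ D') : p ∈ C0 n D' := by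
  obtain ⟨ax1, ax2, ax3, ax4⟩ := hD
  have hb := ax1 p hpD
  have hu1 : ¬ cov D' p.1 := uncov_of_diff ⟨ax1, ax2, ax3, ax4⟩ hsub hpD hpD' (Or.inl rfl)
  have hu2 : ¬ cov D' p.2 := uncov_of_diff ⟨ax1, ax2, ax3, ax4⟩ hsub hpD hpD' (Or.inr rfl)
  have hoddp : Odd p.1 := hodd p (Finset.mem_sdiff.mpr ⟨hpD, hpD'⟩)
  have hbet : ∀ k, p.1 < k → k < p.2 → cov D' k := by
    by_contra hcon
    push_neg at hcon
    obtain ⟨k0, hk01, hk02, hk03⟩ := hcon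
    set T := (Finset.Ioo p.1 p.2).filter (fun k => ¬ cov D' k) with hT
    have hTne : T.Nonempty := ⟨k0, by simp [hT, hk01, hk02, hk03]⟩
    set w := T.min' hTne with hw
    have hwT : w ∈ T := T.min'_mem hTne
    have hwIoo : p.1 < w ∧ w < p.2 := by
      have := Finset.mem_filter.mp hwT
      exact Finset.mem_Ioo.mp this.1
    have hwunc : ¬ cov D' w := (Finset.mem_filter.mp hwT).2
    have hwmin : ∀ k, p.1 < k → k < w → cov D' k := by
      intro k h1 h2
      by_contra hk
      have hkT : k ∈ T := by
        simp only [hT, Finset.mem_filter, Finset.mem_Ioo]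
        exact ⟨⟨h1, by omega⟩, hk⟩
      have := T.min'_le k hkT
      omega
    -- w is covered in D by some q ∈ D \ D'
    obtain ⟨q, hqD, hwq⟩ := ax4 p hpD w hwIoo.1 hwIoo.2
    have hqD' : q ∉ D' := fun h => hwunc ⟨q, h, hwq⟩
    have hqb := ax1 q hqD
    have hqne : q ≠ p := by
      rintro rfl
      rcases hwq with h | h <;> omega
    have hq4 := ax2 q hqD p hpD hqne
    -- show w = q.1
    have hwq1 : w = q.1 := by
      rcases hwq with h | h
      · exact h
      · -- w = q.2 : then q.1 is a smaller uncovered point in the interval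
        exfalso
        have hq1gt : p.1 < q.1 := by
          rcases Nat.lt_trichotomy q.1 p.1 with h1 | h1 | h1
          · exact absurd ⟨h1, by omega, by omega⟩ (ax3 q hqD p hpD)
          · omega
          · exact h1
        have hq1unc : ¬ cov D' q.1 :=
          uncov_of_diff ⟨ax1, ax2, ax3, ax4⟩ hsub hqD hqD' (Or.inl rfl)
        exact hq1unc (hwmin q.1 hq1gt (by omega))
    have hqodd : Odd q.1 := hodd q (Finset.mem_sdiff.mpr ⟨hqD, hqD'⟩)
    -- parity contradiction on the gap (p.1, w)
    have hgap := evenGap hD' p.1 w hu1 hwunc (fun k h1 h2 => hwmin k h1 h2)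
    rw [Nat.odd_iff] at hoddp hqodd
    omega
  rw [mem_C0]
  exact ⟨hb.2.1, hoddp, ⟨hb.1, by omega, hu1⟩, ⟨by omega, hb.2.2, hu2⟩, hbet⟩

lemma Cm_subset {n : ℕ} {I : Finset ℕ} {D' : Finset (ℕ × ℕ)} :
    Cm n I D' ⊆ C0 n D' := Finset.filter_subset _ _

/-- distinctness between two C0 pairs. -/
lemma C0_ne {n : ℕ} {D' : Finset (ℕ × ℕ)} (hD' : IsTL n D') {p q : ℕ × ℕ}
    (hp : p ∈ C0 n D') (hq : q ∈ C0 n D') (hne : p ≠ q) :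
    p.1 ≠ q.1 ∧ p.1 ≠ q.2 ∧ p.2 ≠ q.1 ∧ p.2 ≠ q.2 := by
  have h1 : p.1 ≠ q.1 := fun h => hne (C0_succ_unique hp hq h)
  have hplt := (mem_C0.mp hp).1
  have hqlt := (mem_C0.mp hq).1
  rcases Nat.lt_or_ge p.1 q.1 with h | h
  · have := C0_sep hD' hp hq h
    omega
  · have := C0_sep hD' hq hp (by omega)
    omega

/-- C0 pairs don't touch D' pairs. -/
lemma C0_ne_D' {n : ℕ} {D' : Finset (ℕ × ℕ)} {p q : ℕ × ℕ}
    (hp : p ∈ C0 n D') (hq : q ∈ D') :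
    p.1 ≠ q.1 ∧ p.1 ≠ q.2 ∧ p.2 ≠ q.1 ∧ p.2 ≠ q.2 := by
  obtain ⟨_, _, hu1, hu2, _⟩ := mem_C0.mp hp
  refine ⟨?_, ?_, ?_, ?_⟩ <;> intro h
  · exact hu1.2.2 ⟨q, hq, Or.inl h⟩
  · exact hu1.2.2 ⟨q, hq, Or.inr h⟩
  · exact hu2.2.2 ⟨q, hq, Or.inl h⟩
  · exact hu2.2.2 ⟨q, hq, Or.inr h⟩

lemma isTL_union {n : ℕ} {I : Finset ℕ} {D' : Finset (ℕ × ℕ)} (hD' : IsTL n D') :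
    IsTL n (D' ∪ Cm n I D') := by
  obtain ⟨ax1, ax2, ax3, ax4⟩ := hD'
  have hD'' : IsTL n D' := ⟨ax1, ax2, ax3, ax4⟩
  have hCmem : ∀ p ∈ Cm n I D', p ∈ C0 n D' := fun p hp => Cm_subset hp
  refine ⟨?_, ?_, ?_, ?_⟩
  · intro p hp
    rcases Finset.mem_union.mp hp with h | h
    · exact ax1 p h
    · obtain ⟨hlt, _, hu1, hu2, _⟩ := mem_C0.mp (hCmem p h)
      exact ⟨hu1.1, hlt, hu2.2.1⟩
  · intro p hp q hq hne
    rcases Finset.mem_union.mp hp with h | h <;> rcases Finset.mem_union.mp hq with h' | h'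
    · exact ax2 p h q h' hne
    · have := C0_ne_D' (hCmem q h') h
      omega
    · exact C0_ne_D' (hCmem p h) h'
    · exact C0_ne hD'' (hCmem p h) (hCmem q h') hne
  · intro p hp q hq
    rintro ⟨h1, h2, h3⟩
    rcases Finset.mem_union.mp hp with h | h <;> rcases Finset.mem_union.mp hq with h' | h'
    · exact ax3 p h q h' ⟨h1, h2, h3⟩
    · -- p ∈ D', q ∈ Cm : q.1 strictly inside p, but q.1 is uncovered
      obtain ⟨_, _, hu1, _, _⟩ := mem_C0.mp (hCmem q h')
      exact hu1.2.2 (ax4 p h q.1 h1 h2)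
    · -- p ∈ Cm, q ∈ D' : p.2 strictly inside q, but p.2 is uncovered
      obtain ⟨_, _, _, hu2, _⟩ := mem_C0.mp (hCmem p h)
      exact hu2.2.2 (ax4 q h' p.2 h2 h3)
    · have hp0 := hCmem p h
      have hq0 := hCmem q h'
      have hplt := (mem_C0.mp hp0).1
      rcases Nat.lt_trichotomy p.1 q.1 with hlt | heq | hgt
      · have := C0_sep hD'' hp0 hq0 hlt; omega
      · have := C0_succ_unique hp0 hq0 heq; rw [this] at h2; omega
      · have := C0_sep hD'' hq0 hp0 hgt; omega
  · intro p hp k h1 h2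
    rcases Finset.mem_union.mp hp with h | h
    · obtain ⟨q, hq, hk⟩ := ax4 p h k h1 h2
      exact ⟨q, Finset.mem_union_left _ hq, hk⟩
    · obtain ⟨_, _, _, _, hbet⟩ := mem_C0.mp (hCmem p h)
      obtain ⟨q, hq, hk⟩ := hbet k h1 h2
      exact ⟨q, Finset.mem_union_left _ hq, hk⟩

lemma compat_union {n : ℕ} {I : Finset ℕ} {D' : Finset (ℕ × ℕ)}
    (hc : Compat I D') : Compat I (D' ∪ Cm n I D') := by
  intro p hp
  rcases Finset.mem_union.mp hp with h | h
  · exact hc p h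
  · exact (Finset.mem_filter.mp h).2

/-- the uncovered set. -/
noncomputable def U (n : ℕ) (D' : Finset (ℕ × ℕ)) : Finset ℕ :=
  (Finset.Icc 1 (2*n)).filter (fun k => ¬ cov D' k)

lemma mem_U {n : ℕ} {D' : Finset (ℕ × ℕ)} {k : ℕ} :
    k ∈ U n D' ↔ unc n D' k := by
  simp [U, unc, Finset.mem_filter, Finset.mem_Icc, and_assoc]

/-- every uncovered vertex is an endpoint of a C0 pair. -/
lemma U_eq_biUnion {n : ℕ} {D' : Finset (ℕ × ℕ)} (hD' : IsTL n D') :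
    U n D' = (C0 n D').biUnion (fun p => {p.1, p.2}) := by
  ext u
  simp only [Finset.mem_biUnion, Finset.mem_insert, Finset.mem_singleton]
  constructor
  · intro hu
    have hu' : unc n D' u := mem_U.mp hu
    have hu1 : 1 ≤ u := hu'.1
    have hu2 : u ≤ 2*n := hu'.2.1
    rcases Nat.even_or_odd u with hev | hodd
    · -- u is even: find predecessor
      set T := (U n D').filter (fun k => k < u) with hT
      have hTne : T.Nonempty := by
        by_contra hne
        rw [Finset.not_nonempty_iff_eq_empty] at hne
        have h0 : ¬ cov D' 0 := fun h => by have := cov_bounds hD' h; omega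
        have hgap := evenGap hD' 0 u h0 hu'.2.2 (fun k h1 h2 => by
          by_contra hk
          have : k ∈ T := by
            rw [hT, Finset.mem_filter, mem_U]
            exact ⟨⟨by omega, by omega, hk⟩, h2⟩
          rw [hne] at this
          exact absurd this (Finset.notMem_empty k))
        rw [Nat.even_iff] at hev
        have := hu'.1
        omega
      set i := T.max' hTne with hi
      have hiT : i ∈ T := T.max'_mem hTne
      have hiu : unc n D' i := mem_U.mp (Finset.mem_filter.mp hiT).1
      have hilt : i < u := (Finset.mem_filter.mp hiT).2
      have hi1 : 1 ≤ i := hiu.1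
      have hbet : ∀ k, i < k → k < u → cov D' k := by
        intro k h1 h2
        by_contra hk
        have hkT : k ∈ T := by
          rw [hT, Finset.mem_filter, mem_U]
          exact ⟨⟨by omega, by omega, hk⟩, h2⟩
        have := T.le_max' k hkT
        omega
      have hgap := evenGap hD' i u hiu.2.2 hu'.2.2 hbet
      have hiodd : Odd i := by
        rw [Nat.odd_iff]
        rw [Nat.even_iff] at hev
        omega
      refine ⟨(i, u), ?_, Or.inr rfl⟩
      rw [mem_C0]
      exact ⟨hilt, hiodd, hiu, hu', hbet⟩
    · -- u is odd: find successor
      set T := (U n D').filter (fun k => u < k) with hT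
      have hTne : T.Nonempty := by
        by_contra hne
        rw [Finset.not_nonempty_iff_eq_empty] at hne
        have h2n : ¬ cov D' (2*n+1) := fun h => by have := cov_bounds hD' h; omega
        have hgap := evenGap hD' u (2*n+1) hu'.2.2 h2n (fun k h1 h2 => by
          by_contra hk
          have : k ∈ T := by
            rw [hT, Finset.mem_filter, mem_U]
            exact ⟨⟨by omega, by omega, hk⟩, h1⟩
          rw [hne] at this
          exact absurd this (Finset.notMem_empty k))
        rw [Nat.odd_iff] at hodd
        have := hu'.2.1
        omega
      set j := T.min' hTne with hj
      have hjT : j ∈ T := T.min'_mem hTne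
      have hju : unc n D' j := mem_U.mp (Finset.mem_filter.mp hjT).1
      have hjlt : u < j := (Finset.mem_filter.mp hjT).2
      have hj2 : j ≤ 2*n := hju.2.1
      have hbet : ∀ k, u < k → k < j → cov D' k := by
        intro k h1 h2
        by_contra hk
        have hkT : k ∈ T := by
          rw [hT, Finset.mem_filter, mem_U]
          exact ⟨⟨by omega, by omega, hk⟩, h1⟩
        have := T.min'_le k hkT
        omega
      refine ⟨(u, j), ?_, Or.inl rfl⟩
      rw [mem_C0]
      exact ⟨hjlt, hodd, hu', hju, hbet⟩
  · rintro ⟨p, hp, h | h⟩ <;> rw [mem_U] <;> subst h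
    · exact (mem_C0.mp hp).2.2.1
    · exact (mem_C0.mp hp).2.2.2.1

lemma pair_inter_card {I : Finset ℕ} {a b : ℕ} (hab : a ≠ b) :
    (({a, b} : Finset ℕ) ∩ I).card
      = (if a ∈ I then 1 else 0) + (if b ∈ I then 1 else 0) := by
  rw [← Finset.filter_mem_eq_inter, Finset.card_filter, Finset.sum_pair hab]

lemma card_even {n : ℕ} {I : Finset ℕ} {D' : Finset (ℕ × ℕ)} (hD' : IsTL n D')
    (hI : I ⊆ Finset.Icc 1 (2 * n)) (heven : Even I.card) (hc : Compat I D') :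
    Even ((D' ∪ Cm n I D').card) := by
  have hdisj : Disjoint D' (Cm n I D') := by
    rw [Finset.disjoint_left]
    intro p hp hp'
    have h0 : p ∈ C0 n D' := Finset.filter_subset _ _ hp'
    exact (mem_C0.mp h0).2.2.1.2.2 ⟨p, hp, Or.inl rfl⟩
  rw [Finset.card_union_of_disjoint hdisj]
  set covS := D'.biUnion (fun p => ({p.1, p.2} : Finset ℕ)) with hcovS
  have hmemcov : ∀ k, k ∈ covS ↔ cov D' k := by
    intro k
    simp [hcovS, cov, Finset.mem_biUnion]
  -- I splits
  have hIsplit : I.card = (I ∩ covS).card + (I ∩ U n D').card := by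
    rw [← Finset.card_union_of_disjoint]
    · congr 1
      ext x
      simp only [Finset.mem_union, Finset.mem_inter]
      constructor
      · intro hx
        have hx' := hI hx
        by_cases h : cov D' x
        · exact Or.inl ⟨hx, (hmemcov x).mpr h⟩
        · refine Or.inr ⟨hx, ?_⟩
          rw [mem_U]
          simp only [Finset.mem_Icc] at hx'
          exact ⟨hx'.1, hx'.2, h⟩
      · rintro (⟨h, _⟩ | ⟨h, _⟩) <;> exact h
    · rw [Finset.disjoint_left]
      intro x hx1 hx2
      exact (mem_U.mp (Finset.mem_inter.mp hx2).2).2.2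
        ((hmemcov x).mp (Finset.mem_inter.mp hx1).2)
  -- I ∩ covS has card = D'.card
  have hIcov : (I ∩ covS).card = D'.card := by
    have : I ∩ covS = D'.biUnion (fun p => ({p.1, p.2} : Finset ℕ) ∩ I) := by
      ext x
      simp only [Finset.mem_inter, hcovS, Finset.mem_biUnion]
      tauto
    rw [this, Finset.card_biUnion]
    · rw [Finset.sum_congr rfl (g := fun _ => 1), Finset.sum_const, smul_eq_mul, mul_one]
      intro p hp
      have hne : p.1 ≠ p.2 := by have := hD'.1 p hp; omega
      rw [pair_inter_card hne]
      rcases hc p hp with ⟨h1, h2⟩ | ⟨h1, h2⟩ <;> simp [h1, h2]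
    · intro p hp q hq hne
      have h4 := hD'.2.1 p hp q hq hne
      rw [Function.onFun, Finset.disjoint_left]
      intro x hx hx'
      simp only [Finset.mem_inter, Finset.mem_insert, Finset.mem_singleton] at hx hx'
      rcases hx.1 with rfl | rfl <;> rcases hx'.1 with h | h <;> omega
  -- I ∩ U counting mod 2
  have hIU : Even ((I ∩ U n D').card + (Cm n I D').card) := by
    have hU : I ∩ U n D' = (C0 n D').biUnion (fun p => ({p.1, p.2} : Finset ℕ) ∩ I) := by
      rw [U_eq_biUnion hD']
      ext x
      simp only [Finset.mem_inter, Finset.mem_biUnion]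
      tauto
    have hcard : (I ∩ U n D').card
        = ∑ p ∈ C0 n D', (({p.1, p.2} : Finset ℕ) ∩ I).card := by
      rw [hU, Finset.card_biUnion]
      intro p hp q hq hne
      have h4 := C0_ne hD' hp hq hne
      rw [Function.onFun, Finset.disjoint_left]
      intro x hx hx'
      simp only [Finset.mem_inter, Finset.mem_insert, Finset.mem_singleton] at hx hx'
      rcases hx.1 with rfl | rfl <;> rcases hx'.1 with h | h <;> omega
    have hcm : (Cm n I D').card = ∑ p ∈ C0 n D',
        (if (p.1 ∈ I ∧ p.2 ∉ I) ∨ (p.1 ∉ I ∧ p.2 ∈ I) then 1 else 0) := by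
      rw [Cm, Finset.card_filter]
    rw [hcard, hcm, ← Finset.sum_add_distrib]
    apply Finset.even_sum
    intro p hp
    have hne : p.1 ≠ p.2 := by have := (mem_C0.mp hp).1; omega
    rw [pair_inter_card hne]
    by_cases h1 : p.1 ∈ I <;> by_cases h2 : p.2 ∈ I <;> simp [h1, h2]
  rw [Nat.even_iff] at heven hIU ⊢
  omega

end TLaux

/-- If `I ⊆ [2n]` has even cardinality and `D' ∈ D(I)`, then there exists a unique
`D_max ∈ T_n^e ∩ D(I)` with `D' ∈ S(D_max)` which is maximal: for every `D ∈ D(I)` with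
`D' ∈ S(D)` one has `S(D) ⊆ S(D_max)`. -/
theorem exists_unique_max (n : ℕ) (I : Finset ℕ) (hI : I ⊆ Finset.Icc 1 (2 * n))
    (heven : Even I.card) (D' : Finset (ℕ × ℕ)) (hD' : IsTL n D') (hc : Compat I D') :
    ∃! Dmax : Finset (ℕ × ℕ),
      IsTL n Dmax ∧ Even Dmax.card ∧ Compat I Dmax ∧ D' ∈ SD n Dmax ∧
        ∀ D : Finset (ℕ × ℕ), IsTL n D → Compat I D → D' ∈ SD n D → SD n D ⊆ SD n Dmax := by
  classical
  set Dmax := D' ∪ TLaux.Cm n I D' with hDmaxdef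
  have hTL : IsTL n Dmax := TLaux.isTL_union hD'
  have hEv : Even Dmax.card := TLaux.card_even hD' hI heven hc
  have hCompat : Compat I Dmax := TLaux.compat_union hc
  have hSD : D' ∈ SD n Dmax := by
    refine ⟨hD', Finset.subset_union_left, ?_⟩
    intro p hp
    rw [Finset.mem_sdiff] at hp
    have hpC : p ∈ TLaux.Cm n I D' := by
      rcases Finset.mem_union.mp hp.1 with h | h
      · exact absurd h hp.2
      · exact h
    exact (TLaux.mem_C0.mp (Finset.filter_subset _ _ hpC)).2.1
  have hmax : ∀ D, IsTL n D → Compat I D → D' ∈ SD n D → SD n D ⊆ SD n Dmax := by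
    intro D hD hcD hSDD
    obtain ⟨-, hsub, hodd⟩ := hSDD
    have hDsub : D ⊆ Dmax := by
      intro p hpD
      by_cases hp' : p ∈ D'
      · exact Finset.mem_union_left _ hp'
      · refine Finset.mem_union_right _ ?_
        rw [TLaux.Cm, Finset.mem_filter]
        exact ⟨TLaux.mem_C0_of_diff hD' hD hsub hodd hpD hp', hcD p hpD⟩
    intro E hE
    obtain ⟨hE1, hE2, hE3⟩ := hE
    refine ⟨hE1, hE2.trans hDsub, ?_⟩
    intro p hp
    rw [Finset.mem_sdiff] at hp
    rcases Finset.mem_union.mp hp.1 with h | h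
    · exact hE3 p (Finset.mem_sdiff.mpr ⟨hsub h, hp.2⟩)
    · exact (TLaux.mem_C0.mp (Finset.filter_subset _ _ h)).2.1
  refine ⟨Dmax, ⟨hTL, hEv, hCompat, hSD, hmax⟩, ?_⟩
  rintro E ⟨hE1, hE2, hE3, hE4, hE5⟩
  have hselfE : E ∈ SD n E := ⟨hE1, Finset.Subset.refl E, by simp⟩
  have hselfM : Dmax ∈ SD n Dmax := ⟨hTL, Finset.Subset.refl _, by simp⟩
  have h1 : E ⊆ Dmax := (hmax E hE1 hE3 hE4 hselfE).2.1
  have h2 : Dmax ⊆ E := (hE5 Dmax hTL hCompat hSD hselfM).2.1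
  exact Finset.Subset.antisymm h1 h2
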